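/- Connected correlation bound for the entanglement spectrum: let ρ be a state on H_A ⊗ H_B such that |C(O₁,O₂)| ≤ ‖O₁‖‖O₂‖ε for all operators O₁ on H_A and O₂ on H_B, where C(O₁,O₂) = ⟨O₁O₂⟩ - ⟨O₁⟩⟨O₂⟩ and 0 < ε < 1/e. Then for any operator O on H_B, |C(Ĥ_A, O)| ≤ ε‖O‖(18 log d_A + 4 log(1/ε)), where Ĥ_A = -(log ρ_A) ⊗ I_B and d_A = dim H_A ≥ 2. -/

import Mathlib

noncomputable section
open Matrix Finset
open scoped ComplexOrder

/-- Matrix logarithm via the spectral decomposition (junk value `0` for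
non-Hermitian input). -/
def matLog {n : Type*} [Fintype n] [DecidableEq n] (ρ : Matrix n n ℂ) :
    Matrix n n ℂ :=
  if h : ρ.IsHermitian then
    (h.eigenvectorUnitary : Matrix n n ℂ) *
      Matrix.diagonal (fun i => (Real.log (h.eigenvalues i) : ℂ)) *
      star (h.eigenvectorUnitary : Matrix n n ℂ)
  else 0

/-- Trace norm `‖X‖₁ = Tr √(XᴴX)`. -/
def traceNorm {n : Type*} [Fintype n] [DecidableEq n] (X : Matrix n n ℂ) : ℝ :=
  (((Matrix.posSemidef_conjTranspose_mul_self X).1.eigenvectorUnitary : Matrix n n ℂ) *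
    Matrix.diagonal (fun i => ((Real.sqrt ((Matrix.posSemidef_conjTranspose_mul_self X).1.eigenvalues i) : ℝ) : ℂ)) *
    star ((Matrix.posSemidef_conjTranspose_mul_self X).1.eigenvectorUnitary : Matrix n n ℂ)).trace.re

/-- Operator (spectral) norm of a matrix. -/
def opNorm {n : Type*} [Fintype n] [DecidableEq n] (X : Matrix n n ℂ) : ℝ :=
  ‖Matrix.toEuclideanCLM (𝕜 := ℂ) X‖

/-- A density matrix: positive semidefinite with unit trace. -/
def IsDensityMatrix {n : Type*} [Fintype n] [DecidableEq n]
    (ρ : Matrix n n ℂ) : Prop :=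
  ρ.PosSemidef ∧ ρ.trace = 1

variable {α β : Type*} [Fintype α] [Fintype β] [DecidableEq α] [DecidableEq β]

/-- Partial trace over the second factor. -/
def ptrB (ρ : Matrix (α × β) (α × β) ℂ) : Matrix α α ℂ :=
  Matrix.of fun a a' => ∑ b : β, ρ (a, b) (a', b)

/-- Extension of an operator on `A` by the identity on `B`. -/
def extA (M : Matrix α α ℂ) : Matrix (α × β) (α × β) ℂ :=
  Matrix.of fun x y => M x.1 y.1 * (if x.2 = y.2 then 1 else 0)

/-- Extension of an operator on `B` by the identity on `A`. -/
def extB (M : Matrix β β ℂ) : Matrix (α × β) (α × β) ℂ :=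
  Matrix.of fun x y => (if x.1 = y.1 then 1 else 0) * M x.2 y.2

/-- The truncated tail `Δ_A^Λ` of the entanglement spectrum of `ρ_A`:
`-Σ_{p_i < 1/Λ} (log p_i) |i⟩⟨i|` in the eigenbasis of `ρ_A`. -/
def specTail (ρA : Matrix α α ℂ) (Λ : ℝ) : Matrix α α ℂ :=
  if h : ρA.IsHermitian then
    (h.eigenvectorUnitary : Matrix α α ℂ) *
      Matrix.diagonal (fun i =>
        if h.eigenvalues i < 1 / Λ then (-(Real.log (h.eigenvalues i)) : ℂ)
        else 0) *
      star (h.eigenvectorUnitary : Matrix α α ℂ)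
  else 0

/-- Connected correlation function `C(X,Y) = ⟨XY⟩ - ⟨X⟩⟨Y⟩`. -/
def connCorr (ρ X Y : Matrix (α × β) (α × β) ℂ) : ℂ :=
  (ρ * (X * Y)).trace - (ρ * X).trace * (ρ * Y).trace

/-! ### Auxiliary lemmas -/

section Aux

open scoped Matrix.Norms.L2Operator
set_option linter.unusedSectionVars false

variable {n : Type*} [Fintype n] [DecidableEq n]

lemma opNorm_eq (X : Matrix n n ℂ) : opNorm X = ‖X‖ := rfl

lemma mat_norm_one_le : ‖(1 : Matrix n n ℂ)‖ ≤ 1 := by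
  rw [Matrix.cstar_norm_def, _root_.map_one]
  exact ContinuousLinearMap.norm_id_le

lemma mat_norm_unitary {U : Matrix n n ℂ} (hU : U ∈ Matrix.unitaryGroup n ℂ) : ‖U‖ ≤ 1 := by
  have h2 : ‖Uᴴ * U‖ = ‖U‖ * ‖U‖ := Matrix.l2_opNorm_conjTranspose_mul_self U
  rw [← Matrix.star_eq_conjTranspose, Unitary.star_mul_self_of_mem hU] at h2
  nlinarith [norm_nonneg U, mat_norm_one_le (n := n)]

lemma euclid_coord_le (v : n → ℂ) (i : n) :
    ‖v i‖ ≤ ‖(WithLp.equiv 2 (n → ℂ)).symm v‖ := by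
  rw [EuclideanSpace.norm_eq]
  have : ‖v i‖ = Real.sqrt (‖v i‖ ^ 2) := by
    rw [Real.sqrt_sq (norm_nonneg _)]
  rw [this]
  apply Real.sqrt_le_sqrt
  have := Finset.single_le_sum (f := fun j => ‖(WithLp.equiv 2 (n → ℂ)).symm v j‖ ^ 2)
    (fun j _ => sq_nonneg _) (Finset.mem_univ i)
  simpa using this

lemma entry_le_norm (X : Matrix n n ℂ) (i j : n) : ‖X i j‖ ≤ ‖X‖ := by
  have h := Matrix.l2_opNorm_mulVec X ((WithLp.equiv 2 (n → ℂ)).symm (Pi.single j 1))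
  have hx : ‖(WithLp.equiv 2 (n → ℂ)).symm (Pi.single j 1)‖ = 1 := by
    rw [WithLp.equiv_symm_apply]
    simp [PiLp.norm_toLp_single]
  have hmv : X *ᵥ Pi.single j 1 = fun i => X i j := by
    ext i; simp [Matrix.mulVec_single]
  rw [hx, mul_one] at h
  calc ‖X i j‖ ≤ ‖(WithLp.equiv 2 (n → ℂ)).symm (X *ᵥ Pi.single j 1)‖ := by
        have := euclid_coord_le (X *ᵥ Pi.single j 1) i
        rwa [hmv] at this ⊢
    _ ≤ ‖X‖ := by
        exact h

lemma mat_norm_le_of_mulVec {X : Matrix n n ℂ} {c : ℝ} (hc : 0 ≤ c)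
    (h : ∀ y : n → ℂ, ‖(WithLp.equiv 2 (n → ℂ)).symm (X *ᵥ y)‖ ≤
      c * ‖(WithLp.equiv 2 (n → ℂ)).symm y‖) : ‖X‖ ≤ c := by
  rw [Matrix.cstar_norm_def]
  apply ContinuousLinearMap.opNorm_le_bound _ hc
  intro x
  have hx : x = (WithLp.equiv 2 (n → ℂ)).symm (WithLp.equiv 2 (n → ℂ) x) := by simp
  rw [hx, WithLp.equiv_symm_apply, Matrix.toEuclideanCLM_toLp]
  exact h _

lemma mat_norm_diagonal_le {d : n → ℂ} {c : ℝ} (hc : 0 ≤ c)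
    (h : ∀ i, ‖d i‖ ≤ c) : ‖Matrix.diagonal d‖ ≤ c := by
  apply mat_norm_le_of_mulVec hc
  intro y
  rw [EuclideanSpace.norm_eq, EuclideanSpace.norm_eq]
  rw [← Real.sqrt_sq hc, ← Real.sqrt_mul (sq_nonneg c)]
  apply Real.sqrt_le_sqrt
  rw [Finset.mul_sum]
  apply Finset.sum_le_sum
  intro i _
  simp only [WithLp.equiv_symm_apply, WithLp.ofLp_toLp, Matrix.mulVec_diagonal]
  rw [norm_mul, mul_pow]
  have hdc : ‖d i‖ ≤ c := by exact h i
  have h0 : (0:ℝ) ≤ ‖y i‖ ^ 2 := sq_nonneg _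
  exact mul_le_mul_of_nonneg_right (pow_le_pow_left₀ (norm_nonneg _) hdc 2) h0

lemma mat_norm_conj_le {U : Matrix n n ℂ} (hU : U ∈ Matrix.unitaryGroup n ℂ)
    (X : Matrix n n ℂ) : ‖U * X * star U‖ ≤ ‖X‖ := by
  have h1 : ‖U * X * star U‖ ≤ ‖U * X‖ * ‖star U‖ := Matrix.l2_opNorm_mul _ _
  have h2 : ‖U * X‖ ≤ ‖U‖ * ‖X‖ := Matrix.l2_opNorm_mul _ _
  have h3 : ‖star U‖ ≤ 1 := mat_norm_unitary (Unitary.star_mem hU)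
  have h4 : ‖U‖ ≤ 1 := mat_norm_unitary hU
  have := norm_nonneg X; have := norm_nonneg (U * X); have := norm_nonneg (star U)
  nlinarith

lemma trace_diagonal_mul (d : n → ℂ) (X : Matrix n n ℂ) :
    (Matrix.diagonal d * X).trace = ∑ i, d i * X i i := by
  simp [Matrix.trace, Matrix.diag, Matrix.diagonal_mul]

lemma trace_eq_sum_eigenvalues {M : Matrix n n ℂ} (hM : M.IsHermitian) :
    M.trace = ∑ i, (hM.eigenvalues i : ℂ) := by
  conv_lhs => rw [hM.spectral_theorem, Unitary.conjStarAlgAut_apply]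
  rw [Matrix.trace_mul_cycle,
    (Matrix.mem_unitaryGroup_iff').mp (hM.eigenvectorUnitary).2, one_mul]
  simp [Matrix.trace_diagonal]

lemma trace_mul_le_of_posSemidef {M : Matrix n n ℂ} (N : Matrix n n ℂ)
    (hM : M.PosSemidef) : ‖(M * N).trace‖ ≤ ‖N‖ * M.trace.re := by
  have hH : M.IsHermitian := hM.1
  have hU : (hH.eigenvectorUnitary : Matrix n n ℂ) ∈ Matrix.unitaryGroup n ℂ :=
    (hH.eigenvectorUnitary).2
  set U : Matrix n n ℂ := (hH.eigenvectorUnitary : Matrix n n ℂ) with hUdef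
  have htr : (M * N).trace
      = (Matrix.diagonal (RCLike.ofReal ∘ hH.eigenvalues) * (star U * N * U)).trace := by
    conv_lhs => rw [hH.spectral_theorem, Unitary.conjStarAlgAut_apply]
    rw [← hUdef, mul_assoc, mul_assoc, Matrix.trace_mul_comm, mul_assoc, mul_assoc]
  rw [htr, trace_diagonal_mul]
  have hbound : ∀ i, ‖(star U * N * U) i i‖ ≤ ‖N‖ := by
    intro i
    calc ‖(star U * N * U) i i‖ ≤ ‖star U * N * U‖ := entry_le_norm _ i i
      _ ≤ ‖N‖ := by
          have := mat_norm_conj_le (Unitary.star_mem hU) N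
          rwa [star_star] at this
  have hre : M.trace.re = ∑ i, hH.eigenvalues i := by
    rw [trace_eq_sum_eigenvalues hH]
    simp
  rw [hre]
  calc ‖∑ i, (RCLike.ofReal ∘ hH.eigenvalues) i * (star U * N * U) i i‖
      ≤ ∑ i, ‖(RCLike.ofReal ∘ hH.eigenvalues) i * (star U * N * U) i i‖ := by
        exact (norm_sum_le _ _)
    _ ≤ ∑ i, hH.eigenvalues i * ‖N‖ := by
        apply Finset.sum_le_sum
        intro i _
        rw [norm_mul]
        have h1 : ‖((RCLike.ofReal ∘ hH.eigenvalues) i : ℂ)‖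
            = hH.eigenvalues i := by
          simp [Complex.norm_real, abs_of_nonneg (hM.eigenvalues_nonneg i)]
        rw [h1]
        exact mul_le_mul_of_nonneg_left (hbound i) (hM.eigenvalues_nonneg i)
    _ = ‖N‖ * ∑ i, hH.eigenvalues i := by rw [← Finset.sum_mul]; ring

end Aux

section AuxAB

open scoped Matrix.Norms.L2Operator
set_option linter.unusedSectionVars false

lemma extA_mul (M N : Matrix α α ℂ) : extA (M * N) = (extA M : Matrix (α × β) _ _) * extA N := by
  ext ⟨a, b⟩ ⟨a', b'⟩
  simp only [extA, Matrix.mul_apply, Matrix.of_apply, Fintype.sum_prod_type]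
  simp [mul_ite, ite_mul, Finset.sum_ite_eq, Finset.mul_sum, mul_comm, mul_assoc]

lemma extA_comm_extB (M : Matrix α α ℂ) (N : Matrix β β ℂ) :
    extA M * extB N = extB N * extA M := by
  ext ⟨a, b⟩ ⟨a', b'⟩
  simp only [extA, extB, Matrix.mul_apply, Matrix.of_apply, Fintype.sum_prod_type]
  simp [mul_ite, ite_mul, Finset.sum_ite_eq, Finset.sum_ite_eq', mul_comm]

lemma extA_add (M N : Matrix α α ℂ) : extA (M + N) = (extA M : Matrix (α × β) _ _) + extA N := by
  ext ⟨a, b⟩ ⟨a', b'⟩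
  simp only [extA, Matrix.add_apply, Matrix.of_apply]
  split <;> simp

lemma extA_neg (M : Matrix α α ℂ) : extA (-M) = -(extA M : Matrix (α × β) _ _) := by
  ext ⟨a, b⟩ ⟨a', b'⟩
  simp only [extA, Matrix.neg_apply, Matrix.of_apply]
  split <;> simp

lemma extA_conjTranspose (M : Matrix α α ℂ) :
    (extA M : Matrix (α × β) _ _)ᴴ = extA Mᴴ := by
  ext ⟨a, b⟩ ⟨a', b'⟩
  simp only [extA, Matrix.conjTranspose_apply, Matrix.of_apply]
  by_cases h : b' = b <;> simp [h, eq_comm] <;> intro <;> simp_all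

lemma trace_mul_extA (ρ : Matrix (α × β) (α × β) ℂ) (M : Matrix α α ℂ) :
    (ρ * extA M).trace = (ptrB ρ * M).trace := by
  simp only [Matrix.trace, Matrix.diag, Matrix.mul_apply, extA, ptrB, Matrix.of_apply,
    Fintype.sum_prod_type, mul_ite, mul_one, mul_zero, ← mul_assoc,
    Finset.sum_ite_eq', Finset.mem_univ, if_true]
  apply Finset.sum_congr rfl; intro a _
  rw [Finset.sum_comm]
  apply Finset.sum_congr rfl; intro a' _
  rw [Finset.sum_mul]

lemma trace_ptrB (ρ : Matrix (α × β) (α × β) ℂ) : (ptrB ρ).trace = ρ.trace := by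
  simp [Matrix.trace, Matrix.diag, ptrB, Fintype.sum_prod_type]

lemma sq_euclid_norm {γ : Type*} [Fintype γ] (v : γ → ℂ) :
    ‖(WithLp.equiv 2 (γ → ℂ)).symm v‖ ^ 2 = ∑ b, ‖v b‖ ^ 2 := by
  rw [EuclideanSpace.norm_eq, Real.sq_sqrt (by positivity)]
  simp

lemma extB_mulVec (O : Matrix β β ℂ) (y : α × β → ℂ) (x : α × β) :
    ((extB O : Matrix (α × β) _ _) *ᵥ y) x = (O *ᵥ fun b => y (x.1, b)) x.2 := by
  obtain ⟨a, b⟩ := x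
  simp [extB, Matrix.mulVec, dotProduct, Fintype.sum_prod_type, ite_mul, zero_mul,
    one_mul, Finset.sum_ite_eq, Finset.sum_ite_eq', mul_assoc]

lemma extB_norm_le (O : Matrix β β ℂ) : ‖(extB O : Matrix (α × β) _ _)‖ ≤ ‖O‖ := by
  apply mat_norm_le_of_mulVec (norm_nonneg O)
  intro y
  rw [EuclideanSpace.norm_eq, EuclideanSpace.norm_eq,
    ← Real.sqrt_sq (norm_nonneg O), ← Real.sqrt_mul (sq_nonneg _)]
  apply Real.sqrt_le_sqrt
  simp only [WithLp.equiv_symm_apply, WithLp.ofLp_toLp, Fintype.sum_prod_type, Finset.mul_sum]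
  apply Finset.sum_le_sum
  intro a _
  have key := Matrix.l2_opNorm_mulVec O ((WithLp.equiv 2 (β → ℂ)).symm (fun b => y (a, b)))
  have key2 : ‖(WithLp.equiv 2 (β → ℂ)).symm (O *ᵥ fun b => y (a, b))‖ ^ 2 ≤
      (‖O‖ * ‖(WithLp.equiv 2 (β → ℂ)).symm (fun b => y (a, b))‖) ^ 2 := by
    apply pow_le_pow_left₀ (norm_nonneg _)
    simpa using key
  rw [sq_euclid_norm, mul_pow, sq_euclid_norm, Finset.mul_sum] at key2
  calc ∑ b, ‖(extB O *ᵥ y) (a, b)‖ ^ 2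
      = ∑ b, ‖(O *ᵥ fun b' => y (a, b')) b‖ ^ 2 := by
        apply Finset.sum_congr rfl; intro b _; rw [extB_mulVec]
    _ ≤ ∑ b, ‖O‖ ^ 2 * ‖y (a, b)‖ ^ 2 := key2

end AuxAB

open scoped Matrix.Norms.L2Operator

set_option maxHeartbeats 2000000

/-- connected correlation bound for the entanglement spectrum:
if all `A`–`B` connected correlations are bounded by `ε`, then for any
operator `O` on `B`,
`|C(Ĥ_A, O)| ≤ ε ‖O‖ (18 log d_A + 4 log(1/ε))`. -/
theorem entanglement_spectrum_connCorr_bound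
    (ρ : Matrix (α × β) (α × β) ℂ) (hρ : IsDensityMatrix ρ)
    (hA : (ptrB ρ).PosDef) (hd : 2 ≤ Fintype.card α)
    (ε : ℝ) (hε : 0 < ε) (hε' : ε < 1 / Real.exp 1)
    (hcorr : ∀ (O₁ : Matrix α α ℂ) (O₂ : Matrix β β ℂ),
      ‖connCorr ρ (extA O₁) (extB O₂)‖ ≤ opNorm O₁ * opNorm O₂ * ε)
    (O : Matrix β β ℂ) :
    ‖connCorr ρ (-(extA (matLog (ptrB ρ)))) (extB O)‖ ≤
      ε * opNorm O * (18 * Real.log (Fintype.card α) + 4 * Real.log (1 / ε)) := by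
  classical
  obtain ⟨hρPSD, hρtr⟩ := hρ
  have hherm : (ptrB ρ).IsHermitian := hA.1
  set d : ℝ := (Fintype.card α : ℝ) with hddef
  have hd2 : (2:ℝ) ≤ d := by rw [hddef]; exact_mod_cast hd
  have hd0 : (0:ℝ) < d := by linarith
  set Λ : ℝ := d ^ 4 / ε ^ 2 with hΛdef
  have hΛpos : 0 < Λ := by positivity
  set p : α → ℝ := hherm.eigenvalues with hpdef
  have hppos : ∀ i, 0 < p i := fun i => hA.eigenvalues_pos i
  have htrρA : (ptrB ρ).trace = 1 := by rw [trace_ptrB, hρtr]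
  have hsum : ∑ i, p i = 1 := by
    have h1 := trace_eq_sum_eigenvalues hherm
    rw [htrρA] at h1
    have h2 := congrArg Complex.re h1
    simpa using h2.symm
  have hple : ∀ i, p i ≤ 1 := by
    intro i
    rw [← hsum]
    exact Finset.single_le_sum (fun j _ => (hppos j).le) (Finset.mem_univ i)
  have hUmem : (hherm.eigenvectorUnitary : Matrix α α ℂ) ∈ Matrix.unitaryGroup α ℂ :=
    hherm.eigenvectorUnitary.2
  set U : Matrix α α ℂ := (hherm.eigenvectorUnitary : Matrix α α ℂ) with hUdef
  have hUU : star U * U = 1 := Matrix.mem_unitaryGroup_iff'.mp hUmem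
  have hcancel : ∀ X : Matrix α α ℂ, star U * (U * X) = X := by
    intro X; rw [← mul_assoc, hUU, one_mul]
  have conjmul : ∀ D E : Matrix α α ℂ,
      (U * D * star U) * (U * E * star U) = U * (D * E) * star U := by
    intro D E
    simp only [mul_assoc, hcancel]
  -- real numbers
  set L : ℝ := Real.log d with hLdef
  set E : ℝ := Real.log (1 / ε) with hEdef
  have hL : 0 < L := Real.log_pos (by linarith)
  have hE : 1 ≤ E := by
    rw [hEdef]
    have h1 : Real.exp 1 ≤ 1 / ε := by
      rw [le_div_iff₀ hε]
      rw [lt_div_iff₀ (Real.exp_pos 1)] at hε'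
      nlinarith [hε']
    calc (1:ℝ) = Real.log (Real.exp 1) := (Real.log_exp 1).symm
      _ ≤ Real.log (1 / ε) := Real.log_le_log (Real.exp_pos 1) h1
  have hlogΛ : Real.log Λ = 4 * L + 2 * E := by
    rw [hΛdef, Real.log_div (by positivity) (by positivity), Real.log_pow, Real.log_pow,
      hEdef, one_div, Real.log_inv]
    push_cast; ring
  have hlogΛ0 : 0 ≤ Real.log Λ := by rw [hlogΛ]; nlinarith
  -- eigenvalue functions
  set g : α → ℂ := fun i => if p i < 1 / Λ then 0 else ((-Real.log (p i) : ℝ) : ℂ) with hgdef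
  set t : α → ℝ := fun i => if p i < 1 / Λ then -Real.log (p i) else 0 with htdef
  have ht0 : ∀ i, 0 ≤ t i := by
    intro i
    rw [htdef]
    dsimp only
    split
    · simp only [neg_nonneg]
      exact Real.log_nonpos (hppos i).le (hple i)
    · exact le_refl 0
  set Hreg : Matrix α α ℂ := U * Matrix.diagonal g * star U with hHregdef
  have hΔ : specTail (ptrB ρ) Λ = U * Matrix.diagonal (fun i => (t i : ℂ)) * star U := by
    show (if h : (ptrB ρ).IsHermitian then _ else _) = _
    rw [dif_pos hherm]
    have hdiag : (fun i => if hherm.eigenvalues i < 1 / Λ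
          then (-(Real.log (hherm.eigenvalues i)) : ℂ) else 0)
        = fun i => ((t i : ℝ) : ℂ) := by
      funext i
      rw [htdef]
      simp only [← hpdef]
      by_cases h : p i < 1 / Λ
      · rw [if_pos h, if_pos h]; simp
      · rw [if_neg h, if_neg h]; simp
    rw [hdiag]
  have hlogeq : matLog (ptrB ρ) = U * Matrix.diagonal (fun i => (Real.log (p i) : ℂ)) * star U := by
    show (if h : (ptrB ρ).IsHermitian then _ else _) = _
    rw [dif_pos hherm]
  have hsplit : -(matLog (ptrB ρ)) = Hreg + specTail (ptrB ρ) Λ := by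
    rw [hlogeq, hΔ, hHregdef]
    have hfun : (fun i => (-(Real.log (p i)) : ℂ)) = fun i => g i + (t i : ℂ) := by
      funext i
      rw [hgdef, htdef]
      dsimp only
      by_cases h : p i < 1 / Λ
      · rw [if_pos h, if_pos h]; simp
      · rw [if_neg h, if_neg h]; simp
    have h1 : -(U * Matrix.diagonal (fun i => (Real.log (p i) : ℂ)) * star U)
        = U * Matrix.diagonal (fun i => (-(Real.log (p i)) : ℂ)) * star U := by
      have : Matrix.diagonal (fun i => (-(Real.log (p i)) : ℂ))
          = -Matrix.diagonal (fun i => ((Real.log (p i)) : ℂ)) := by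
        rw [← Matrix.diagonal_neg]
      rw [this, mul_neg, neg_mul]
    rw [h1, hfun]
    have : Matrix.diagonal (fun i => g i + (t i : ℂ))
        = Matrix.diagonal g + Matrix.diagonal (fun i => (t i : ℂ)) := by
      rw [Matrix.diagonal_add]
    rw [this, Matrix.mul_add, Matrix.add_mul]
  -- split connCorr
  have hCsplit : connCorr ρ (-(extA (matLog (ptrB ρ)))) (extB O)
      = connCorr ρ (extA Hreg) (extB O) + connCorr ρ (extA (specTail (ptrB ρ) Λ)) (extB O) := by
    rw [← extA_neg, hsplit, extA_add]
    simp only [connCorr, Matrix.add_mul, Matrix.mul_add, Matrix.trace_add]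
    ring
  rw [hCsplit]
  have hOnn : 0 ≤ opNorm O := by rw [opNorm_eq]; exact norm_nonneg O
  -- bound on the regular part
  have hHreg_norm : opNorm Hreg ≤ Real.log Λ := by
    rw [opNorm_eq, hHregdef]
    calc ‖U * Matrix.diagonal g * star U‖ ≤ ‖Matrix.diagonal g‖ := mat_norm_conj_le hUmem _
      _ ≤ Real.log Λ := by
          apply mat_norm_diagonal_le hlogΛ0
          intro i
          rw [hgdef]
          dsimp only
          split
          · simpa using hlogΛ0
          · rename_i h
            push_neg at h
            rw [Complex.norm_real, Real.norm_eq_abs, abs_of_nonneg (by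
              simp only [neg_nonneg]
              exact Real.log_nonpos (hppos i).le (hple i))]
            have : -Real.log Λ ≤ Real.log (p i) := by
              have h2 : Real.log (1 / Λ) ≤ Real.log (p i) :=
                Real.log_le_log (by positivity) h
              rwa [one_div, Real.log_inv] at h2
            linarith
  have hterm1 : ‖connCorr ρ (extA Hreg) (extB O)‖ ≤ Real.log Λ * opNorm O * ε := by
    calc ‖connCorr ρ (extA Hreg) (extB O)‖ ≤ opNorm Hreg * opNorm O * ε :=
          hcorr Hreg O
      _ ≤ Real.log Λ * opNorm O * ε := by
          apply mul_le_mul_of_nonneg_right _ hε.le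
          exact mul_le_mul_of_nonneg_right hHreg_norm hOnn
  -- the tail
  set τ : ℝ := ∑ i, p i * t i with hτdef
  have hτ0 : 0 ≤ τ := Finset.sum_nonneg fun i _ => mul_nonneg (hppos i).le (ht0 i)
  have hsqrtΛ : Real.sqrt Λ = d ^ 2 / ε := by
    have h1 : Λ = (d ^ 2 / ε) ^ 2 := by rw [hΛdef]; field_simp
    rw [h1, Real.sqrt_sq (by positivity)]
  have hτle : τ ≤ ε := by
    have hbound : ∀ i, p i * t i ≤ 2 / Real.sqrt Λ := by
      intro i
      rw [htdef]
      dsimp only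
      split
      · rename_i h
        have hp0 := hppos i
        have hsp : 0 < Real.sqrt (p i) := Real.sqrt_pos.mpr hp0
        have hlog : -Real.log (p i) ≤ 2 / Real.sqrt (p i) := by
          have h1 : Real.log (1 / Real.sqrt (p i)) ≤ 1 / Real.sqrt (p i) - 1 :=
            Real.log_le_sub_one_of_pos (by positivity)
          have h2 : Real.log (1 / Real.sqrt (p i)) = -(1/2) * Real.log (p i) := by
            rw [one_div, Real.log_inv, Real.log_sqrt hp0.le]; ring
          rw [h2] at h1
          have h4 : 2 / Real.sqrt (p i) = 2 * (1 / Real.sqrt (p i)) := by ring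
          rw [h4]
          linarith
        have h4 : p i * (-Real.log (p i)) ≤ p i * (2 / Real.sqrt (p i)) :=
          mul_le_mul_of_nonneg_left hlog hp0.le
        have h5 : p i * (2 / Real.sqrt (p i)) = 2 * Real.sqrt (p i) := by
          rw [mul_div_assoc', mul_comm (p i) 2, mul_div_assoc, Real.div_sqrt]
        have h6 : Real.sqrt (p i) ≤ 1 / Real.sqrt Λ := by
          have := Real.sqrt_le_sqrt h.le
          rwa [one_div, Real.sqrt_inv, ← one_div] at this
        calc p i * (-Real.log (p i)) ≤ 2 * Real.sqrt (p i) := by rw [← h5]; exact h4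
          _ ≤ 2 * (1 / Real.sqrt Λ) := by linarith
          _ = 2 / Real.sqrt Λ := by ring
      · simp [div_nonneg, Real.sqrt_nonneg]
    calc τ ≤ ∑ _i : α, 2 / Real.sqrt Λ := Finset.sum_le_sum fun i _ => hbound i
      _ = d * (2 / Real.sqrt Λ) := by
          rw [Finset.sum_const, nsmul_eq_mul, hddef, Finset.card_univ]
      _ = 2 * ε / d := by rw [hsqrtΛ]; field_simp
      _ ≤ ε := by
          rw [div_le_iff₀ hd0]
          nlinarith
  -- tail analysis
  set S : Matrix α α ℂ := U * Matrix.diagonal (fun i => (Real.sqrt (t i) : ℂ)) * star U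
    with hSdef
  have hSS : S * S = specTail (ptrB ρ) Λ := by
    rw [hΔ, hSdef, conjmul, Matrix.diagonal_mul_diagonal]
    have : (fun i => (Real.sqrt (t i) : ℂ) * (Real.sqrt (t i) : ℂ)) = fun i => ((t i : ℝ) : ℂ) := by
      funext i
      rw [← Complex.ofReal_mul, Real.mul_self_sqrt (ht0 i)]
    rw [this]
  have hSherm : Sᴴ = S := by
    rw [hSdef]
    simp only [Matrix.conjTranspose_mul, Matrix.diagonal_conjTranspose,
      Matrix.star_eq_conjTranspose, Matrix.conjTranspose_conjTranspose]
    have : star (fun i => (Real.sqrt (t i) : ℂ)) = fun i => (Real.sqrt (t i) : ℂ) := by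
      funext i
      simp [Pi.star_apply, Complex.conj_ofReal]
    rw [this, ← mul_assoc]
  set Se : Matrix (α × β) (α × β) ℂ := extA S with hSedef
  have hSeH : Seᴴ = Se := by rw [hSedef, extA_conjTranspose, hSherm]
  have hΔe : extA (specTail (ptrB ρ) Λ) = Se * Se := by
    rw [hSedef, ← extA_mul, hSS]
  have hPSD : (Se * ρ * Se).PosSemidef := by
    have h := hρPSD.mul_mul_conjTranspose_same Se
    rwa [hSeH] at h
  have hT2val : (ρ * extA (specTail (ptrB ρ) Λ)).trace = ((τ : ℝ) : ℂ) := by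
    rw [trace_mul_extA]
    have hspec : ptrB ρ = U * Matrix.diagonal (RCLike.ofReal ∘ p) * star U := by
      conv_lhs => rw [hherm.spectral_theorem, Unitary.conjStarAlgAut_apply]
    rw [hΔ, hspec, conjmul, Matrix.diagonal_mul_diagonal, Matrix.trace_mul_cycle, hUU,
      one_mul, Matrix.trace_diagonal]
    rw [hτdef]
    push_cast
    rfl
  have hOe_norm : ‖(extB O : Matrix (α × β) (α × β) ℂ)‖ ≤ opNorm O := by
    rw [opNorm_eq]; exact extB_norm_le O
  have htrSρS : (Se * ρ * Se).trace = ((τ : ℝ) : ℂ) := by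
    rw [Matrix.trace_mul_cycle, Matrix.trace_mul_comm, ← hT2val, hΔe]
  have hT1 : ‖(ρ * (extA (specTail (ptrB ρ) Λ) * extB O)).trace‖ ≤ opNorm O * τ := by
    have e1 : (ρ * (extA (specTail (ptrB ρ) Λ) * extB O)).trace
        = ((Se * ρ * Se) * extB O).trace := by
      rw [hΔe]
      have e2 : ρ * (Se * Se * extB O) = (ρ * Se * extB O) * Se := by
        have e3 : Se * Se * extB O = Se * (extB O * Se) := by
          rw [mul_assoc, ← extA_comm_extB (M := S) (N := O), ← hSedef]
        rw [e3]
        simp only [mul_assoc]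
      rw [e2, Matrix.trace_mul_comm]
      congr 1
      simp only [mul_assoc]
    rw [e1]
    have hb := trace_mul_le_of_posSemidef (extB O) hPSD
    have hre : (Se * ρ * Se).trace.re = τ := by rw [htrSρS]; simp
    rw [hre] at hb
    exact le_trans hb (mul_le_mul_of_nonneg_right hOe_norm hτ0)
  have hT3 : ‖(ρ * extB O).trace‖ ≤ opNorm O := by
    have h := trace_mul_le_of_posSemidef (extB O) hρPSD
    rw [hρtr] at h
    simp only [Complex.one_re, mul_one] at h
    exact h.trans hOe_norm
  have htail : ‖connCorr ρ (extA (specTail (ptrB ρ) Λ)) (extB O)‖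
      ≤ 2 * τ * opNorm O := by
    rw [connCorr]
    have habs : ‖(ρ * (extA (specTail (ptrB ρ) Λ) * extB O)).trace
          - (ρ * extA (specTail (ptrB ρ) Λ)).trace * (ρ * extB O).trace‖
        ≤ ‖(ρ * (extA (specTail (ptrB ρ) Λ) * extB O)).trace‖
          + ‖(ρ * extA (specTail (ptrB ρ) Λ)).trace * (ρ * extB O).trace‖ := by
            exact norm_sub_le _ _
    have h2 : ‖(ρ * extA (specTail (ptrB ρ) Λ)).trace * (ρ * extB O).trace‖
        ≤ τ * opNorm O := by
      rw [norm_mul, hT2val, Complex.norm_real, Real.norm_eq_abs, abs_of_nonneg hτ0]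
      exact mul_le_mul_of_nonneg_left hT3 hτ0
    calc ‖_‖ ≤ _ := habs
      _ ≤ opNorm O * τ + τ * opNorm O := add_le_add hT1 h2
      _ = 2 * τ * opNorm O := by ring
  -- final combination
  calc ‖connCorr ρ (extA Hreg) (extB O)
        + connCorr ρ (extA (specTail (ptrB ρ) Λ)) (extB O)‖
      ≤ ‖connCorr ρ (extA Hreg) (extB O)‖
        + ‖connCorr ρ (extA (specTail (ptrB ρ) Λ)) (extB O)‖ := by
                exact norm_add_le _ _
    _ ≤ Real.log Λ * opNorm O * ε + 2 * τ * opNorm O := add_le_add hterm1 htail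
    _ ≤ ε * opNorm O * (18 * L + 4 * E) := by
        have h1 : 2 * τ * opNorm O ≤ 2 * ε * opNorm O := by nlinarith
        have h2 : Real.log Λ * opNorm O * ε = ε * opNorm O * (4 * L + 2 * E) := by
          rw [hlogΛ]; ring
        have h3 : ε * opNorm O * (4 * L + 2 * E) + 2 * ε * opNorm O
            ≤ ε * opNorm O * (18 * L + 4 * E) := by
          nlinarith [mul_nonneg hε.le hOnn]
        linarith



end
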